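/- If a Banach lattice E has order continuous norm, then the solid hull of every almost limited set in E is almost limited. -/

import Mathlib

open Filter Topology

section Defs

variable {E : Type*} [NormedAddCommGroup E] [Lattice E] [HasSolidNorm E] [IsOrderedAddMonoid E] [NormedSpace ℝ E]

/-- The value of the modulus `|f|` of a functional at a positive element `x`:
`|f|(x) = sup { f y : |y| ≤ x }`. -/
noncomputable def absVal (f : E →L[ℝ] ℝ) (x : E) : ℝ :=
  sSup ((fun y => f y) '' {y | |y| ≤ x})

/-- The value of the positive part `f⁺` of a functional at a positive element `x`:
`f⁺(x) = sup { f y : 0 ≤ y ≤ x }`. -/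
noncomputable def posVal (f : E →L[ℝ] ℝ) (x : E) : ℝ :=
  sSup ((fun y => f y) '' {y | 0 ≤ y ∧ y ≤ x})

/-- The value of `|f|` at an arbitrary `x`, via `x = x⁺ - x⁻`. -/
noncomputable def absValF (f : E →L[ℝ] ℝ) (x : E) : ℝ :=
  absVal f (x ⊔ 0) - absVal f (-x ⊔ 0)

/-- The value of `f⁺` at an arbitrary `x`, via `x = x⁺ - x⁻`. -/
noncomputable def posValF (f : E →L[ℝ] ℝ) (x : E) : ℝ :=
  posVal f (x ⊔ 0) - posVal f (-x ⊔ 0)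

/-- The value of `f⁻ = (-f)⁺` at an arbitrary `x`. -/
noncomputable def negValF (f : E →L[ℝ] ℝ) (x : E) : ℝ :=
  posValF (-f) x

/-- `f ≤ g` in the dual order: `f x ≤ g x` for all `x ≥ 0`. -/
def FunLe (f g : E →L[ℝ] ℝ) : Prop := ∀ x : E, 0 ≤ x → f x ≤ g x

/-- `|f| ≤ |g|` in the dual order. -/
def FunAbsLe (f g : E →L[ℝ] ℝ) : Prop := ∀ x : E, 0 ≤ x → absVal f x ≤ absVal g x

/-- Disjointness of two functionals: `(|f| ∧ |g|)(x) = 0` for all `x ≥ 0`, where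
`(|f| ∧ |g|)(x) = inf { |f|(y) + |g|(x - y) : 0 ≤ y ≤ x }` (Riesz–Kantorovich). -/
def FunDisjoint (f g : E →L[ℝ] ℝ) : Prop :=
  ∀ x : E, 0 ≤ x →
    sInf ((fun y => absVal f y + absVal g (x - y)) '' {y | 0 ≤ y ∧ y ≤ x}) = 0

/-- A sequence of functionals is weak*-null. -/
def WeakStarNull (f : ℕ → E →L[ℝ] ℝ) : Prop :=
  ∀ x : E, Tendsto (fun n => f n x) atTop (𝓝 0)

/-- A sequence in `E` is weakly null. -/
def WeaklyNull (x : ℕ → E) : Prop :=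
  ∀ f : E →L[ℝ] ℝ, Tendsto (fun n => f (x n)) atTop (𝓝 0)

/-- A sequence of functionals is weakly null (i.e. null for `σ(E*, E**)`). -/
def WeaklyNullDual (f : ℕ → E →L[ℝ] ℝ) : Prop :=
  ∀ Φ : (E →L[ℝ] ℝ) →L[ℝ] ℝ, Tendsto (fun n => Φ (f n)) atTop (𝓝 0)

/-- Disjointness of two elements of a Banach lattice. -/
def ElemDisjoint (x y : E) : Prop := |x| ⊓ |y| = 0

/-- A set is almost limited: it is norm bounded and every disjoint weak*-null sequence of
functionals converges uniformly to zero on it. -/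
def AlmostLimited (A : Set E) : Prop :=
  Bornology.IsBounded A ∧
    ∀ f : ℕ → E →L[ℝ] ℝ, Pairwise (fun m n => FunDisjoint (f m) (f n)) → WeakStarNull f →
      ∀ ε > 0, ∀ᶠ n in atTop, ∀ x ∈ A, |f n x| < ε

/-- A set is limited: it is norm bounded and every weak*-null sequence of functionals
converges uniformly to zero on it. -/
def LimitedSet (A : Set E) : Prop :=
  Bornology.IsBounded A ∧
    ∀ f : ℕ → E →L[ℝ] ℝ, WeakStarNull f →
      ∀ ε > 0, ∀ᶠ n in atTop, ∀ x ∈ A, |f n x| < ε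

/-- A set is almost Dunford–Pettis: it is norm bounded and every disjoint weakly null
sequence of functionals converges uniformly to zero on it. -/
def AlmostDPSet (A : Set E) : Prop :=
  Bornology.IsBounded A ∧
    ∀ f : ℕ → E →L[ℝ] ℝ, Pairwise (fun m n => FunDisjoint (f m) (f n)) → WeaklyNullDual f →
      ∀ ε > 0, ∀ᶠ n in atTop, ∀ x ∈ A, |f n x| < ε

/-- The solid hull of a set. -/
def SolidHull (A : Set E) : Set E := {y | ∃ x ∈ A, |y| ≤ |x|}

/-- A set is L-weakly compact: norm bounded, and every disjoint sequence in its solid hull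
is norm null. -/
def LWeaklyCompact (A : Set E) : Prop :=
  Bornology.IsBounded A ∧
    ∀ x : ℕ → E, (∀ n, x n ∈ SolidHull A) → Pairwise (fun m n => ElemDisjoint (x m) (x n)) →
      Tendsto (fun n => ‖x n‖) atTop (𝓝 0)

/-- A set `B ⊆ E*` is an almost L-set: norm bounded, and every disjoint weakly null sequence
of `E` converges uniformly to zero on `B`. -/
def AlmostLSet (B : Set (E →L[ℝ] ℝ)) : Prop :=
  Bornology.IsBounded B ∧
    ∀ x : ℕ → E, Pairwise (fun m n => ElemDisjoint (x m) (x n)) → WeaklyNull x →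
      ∀ ε > 0, ∀ᶠ n in atTop, ∀ f ∈ B, |f (x n)| < ε

/-- The solid hull of a set of functionals, using the dual order. -/
def DualSolidHull (B : Set (E →L[ℝ] ℝ)) : Set (E →L[ℝ] ℝ) :=
  {g | ∃ f ∈ B, FunAbsLe g f}

/-- A set `B ⊆ E*` is L-weakly compact: norm bounded, and every disjoint sequence in its
solid hull is norm null. -/
def DualLWeaklyCompact (B : Set (E →L[ℝ] ℝ)) : Prop :=
  Bornology.IsBounded B ∧
    ∀ g : ℕ → E →L[ℝ] ℝ, (∀ n, g n ∈ DualSolidHull B) →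
      Pairwise (fun m n => FunDisjoint (g m) (g n)) →
        Tendsto (fun n => ‖g n‖) atTop (𝓝 0)

end Defs

/-- A Banach lattice is σ-Dedekind complete: every (countable) sequence bounded above has a
supremum. -/
def SigmaDedekindComplete (E : Type*) [NormedAddCommGroup E] [Lattice E] [HasSolidNorm E] [IsOrderedAddMonoid E] : Prop :=
  ∀ s : ℕ → E, (∃ b, ∀ n, s n ≤ b) → ∃ a, IsLUB (Set.range s) a

/-- The norm of `E` is order continuous: if a downward directed set has infimum `0`, then it
contains elements of arbitrarily small norm. -/
def OrderContinuousNorm (E : Type*) [NormedAddCommGroup E] [Lattice E] [HasSolidNorm E] [IsOrderedAddMonoid E] : Prop :=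
  ∀ A : Set E, A.Nonempty → DirectedOn (· ≥ ·) A → IsGLB A 0 →
    ∀ ε > 0, ∃ a ∈ A, ‖a‖ < ε

/-- The norm of `E*` is order continuous (with the dual order spelled out): if a nonempty
family of functionals is downward directed, consists of positive functionals, and `0` is its
greatest lower bound, then it contains functionals of arbitrarily small norm. -/
def DualOrderContinuousNorm (E : Type*) [NormedAddCommGroup E] [Lattice E] [HasSolidNorm E] [IsOrderedAddMonoid E] [NormedSpace ℝ E] :
    Prop :=
  ∀ A : Set (E →L[ℝ] ℝ), A.Nonempty →
    (∀ f ∈ A, ∀ g ∈ A, ∃ h ∈ A, FunLe h f ∧ FunLe h g) →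
    (∀ f ∈ A, FunLe 0 f) →
    (∀ g, (∀ f ∈ A, FunLe g f) → FunLe g 0) →
    ∀ ε > 0, ∃ f ∈ A, ‖f‖ < ε

/-- `E` has the weak Dunford–Pettis* property: `f n (x n) → 0` for every weakly null
sequence `(x n)` in `E` and every disjoint weak*-null sequence `(f n)` in `E*`. -/
def WDPStar (E : Type*) [NormedAddCommGroup E] [Lattice E] [HasSolidNorm E] [IsOrderedAddMonoid E] [NormedSpace ℝ E] : Prop :=
  ∀ (x : ℕ → E) (f : ℕ → E →L[ℝ] ℝ), WeaklyNull x →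
    Pairwise (fun m n => FunDisjoint (f m) (f n)) → WeakStarNull f →
      Tendsto (fun n => f n (x n)) atTop (𝓝 0)

/-- `E` has the positive Schur property: every weakly null sequence of positive elements is
norm null. -/
def PositiveSchur (E : Type*) [NormedAddCommGroup E] [Lattice E] [HasSolidNorm E] [IsOrderedAddMonoid E] [NormedSpace ℝ E] : Prop :=
  ∀ x : ℕ → E, (∀ n, 0 ≤ x n) → WeaklyNull x → Tendsto (fun n => ‖x n‖) atTop (𝓝 0)

/-- A set is relatively weakly compact if the weak closure of its image in the weak space is
compact. -/
def RelWeaklyCompact {E : Type*} [NormedAddCommGroup E] [Lattice E] [HasSolidNorm E] [IsOrderedAddMonoid E] [NormedSpace ℝ E]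
    (W : Set E) : Prop :=
  IsCompact (closure ((toWeakSpace ℝ E) '' W))

section AuxLemmas

variable {E : Type*} [NormedAddCommGroup E] [Lattice E] [HasSolidNorm E] [IsOrderedAddMonoid E] [NormedSpace ℝ E]

section AuxLat

/-- Riesz decomposition. -/
lemma riesz_decomp {z a b : E} (ha : 0 ≤ a) (hb : 0 ≤ b) (hz : |z| ≤ a + b) :
    ∃ z₁, |z₁| ≤ a ∧ |z - z₁| ≤ b := by
  have hna : -a ≤ a := neg_le_self ha
  have hz1 : z ≤ a + b := le_trans (le_abs_self z) hz
  have hz2 : -(a + b) ≤ z := le_trans (neg_le_neg hz) (neg_le.2 (neg_le_abs z))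
  refine ⟨(z ⊓ a) ⊔ (-a), ?_, ?_⟩
  · rw [abs_le']
    refine ⟨sup_le inf_le_right hna, ?_⟩
    rw [neg_le]
    exact le_sup_right
  · have hrw : z - ((z ⊓ a) ⊔ (-a)) = ((z - a) ⊔ 0) ⊓ (z + a) := by
      rw [sub_eq_add_neg, neg_sup, neg_neg, neg_inf, add_inf, add_sup]
      rw [add_neg_cancel, sup_comm, ← sub_eq_add_neg]
    have hza : z - a ≤ b := by
      rw [sub_le_iff_le_add, add_comm]; exact hz1
    have hzb : -b ≤ z + a := by
      have h := add_le_add_left hz2 a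
      calc -b = -(a + b) + a := by abel
        _ ≤ z + a := h
    rw [hrw, abs_le']
    constructor
    · exact inf_le_left.trans (sup_le hza hb)
    · rw [neg_le]
      exact le_inf (le_sup_of_le_right (neg_nonpos_of_nonneg hb)) hzb

/-- `a ⊓ (b + c) ≤ a ⊓ b + a ⊓ c` for nonnegative elements. -/
lemma inf_add_le_inf_add_inf {a b c : E} (ha : 0 ≤ a) (hb : 0 ≤ b) (hc : 0 ≤ c) :
    a ⊓ (b + c) ≤ a ⊓ b + a ⊓ c := by
  set d := a ⊓ (b + c) with hd
  have h1 : d - a ⊓ b ≤ a := by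
    rw [sub_le_iff_le_add]
    exact le_add_of_le_of_nonneg inf_le_left (le_inf ha hb)
  have h2 : d - a ⊓ b ≤ c := by
    have hrw : d - a ⊓ b = (d - a) ⊔ (d - b) := by
      rw [sub_eq_add_neg, neg_inf, add_sup, ← sub_eq_add_neg, ← sub_eq_add_neg]
    rw [hrw]
    have hda : d - a ≤ c := le_trans (sub_nonpos.2 inf_le_left) hc
    have hdb : d - b ≤ c := by
      rw [sub_le_iff_le_add, add_comm]; exact inf_le_right
    exact sup_le hda hdb
  have h3 := le_inf h1 h2
  calc d = d - a ⊓ b + a ⊓ b := by abel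
    _ ≤ a ⊓ c + a ⊓ b := add_le_add_left h3 _
    _ = a ⊓ b + a ⊓ c := by abel

end AuxLat

section Aux2


lemma inf_nsmul_eq_zero {a b : E} (ha : 0 ≤ a) (hb : 0 ≤ b) (hab : a ⊓ b = 0) (n : ℕ) :
    a ⊓ (n • b) = 0 := by
  induction n with
  | zero => simp [inf_of_le_right ha]
  | succ n ih =>
    have h1 : a ⊓ ((n + 1) • b) ≤ a ⊓ (n • b) + a ⊓ b := by
      rw [succ_nsmul]
      exact inf_add_le_inf_add_inf ha (nsmul_nonneg hb n) hb
    rw [ih, hab, add_zero] at h1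
    exact le_antisymm h1 (le_inf ha (nsmul_nonneg hb _))

lemma nonneg_of_nsmul_nonneg {u : E} {n : ℕ} (hn : 0 < n) (h : 0 ≤ n • u) : 0 ≤ u := by
  have hd : u⁻ ⊓ u⁺ = 0 := by
    rw [inf_comm]; exact posPart_inf_negPart_eq_zero u
  have hsub : n • u⁺ - n • u⁻ = n • u := by
    rw [← smul_sub, posPart_sub_negPart]
  have hle : n • u⁻ ≤ n • u⁺ := by
    have := h; rw [← hsub] at this; rwa [sub_nonneg] at this
  have h1 : u⁻ ≤ n • u⁻ := by
    calc u⁻ = 1 • u⁻ := (one_nsmul _).symm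
      _ ≤ n • u⁻ := nsmul_le_nsmul_left (negPart_nonneg u) hn
  have h2 : u⁻ ≤ u⁻ ⊓ (n • u⁺) := le_inf le_rfl (h1.trans hle)
  rw [inf_nsmul_eq_zero (negPart_nonneg u) (posPart_nonneg u) hd n] at h2
  have : u⁻ = 0 := le_antisymm h2 (negPart_nonneg u)
  rwa [negPart_eq_zero] at this

lemma smul_nonneg'' {c : ℝ} (hc : 0 ≤ c) {v : E} (hv : 0 ≤ v) : 0 ≤ c • v := by
  have hq : ∀ n : ℕ, 0 ≤ ((⌊c * n⌋₊ : ℝ) / (n : ℝ)) • v := by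
    intro n
    rcases Nat.eq_zero_or_pos n with h0 | hpos
    · subst h0; simp
    · set q : ℝ := (⌊c * n⌋₊ : ℝ) / (n : ℝ) with hqdef
      have hne : (n : ℝ) ≠ 0 := Nat.cast_ne_zero.2 hpos.ne'
      have key : n • (q • v) = ⌊c * n⌋₊ • v := by
        rw [← Nat.cast_smul_eq_nsmul ℝ n (q • v), smul_smul, ← Nat.cast_smul_eq_nsmul ℝ _ v]
        congr 1
        rw [hqdef, mul_comm, div_mul_cancel₀ _ hne]
      have : 0 ≤ n • (q • v) := by
        rw [key]; exact nsmul_nonneg hv _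
      exact nonneg_of_nsmul_nonneg hpos this
  have htend : Filter.Tendsto (fun n : ℕ => ((⌊c * n⌋₊ : ℝ) / (n : ℝ)) • v)
      Filter.atTop (nhds (c • v)) := by
    have h1 : Filter.Tendsto (fun n : ℕ => ((⌊c * n⌋₊ : ℝ) / (n : ℝ))) Filter.atTop (nhds c) :=
      (tendsto_nat_floor_mul_div_atTop hc).comp tendsto_natCast_atTop_atTop
    exact h1.smul_const v
  exact ge_of_tendsto htend (Filter.Eventually.of_forall hq)

lemma smul_le_smul'' {c : ℝ} (hc : 0 ≤ c) {a b : E} (hab : a ≤ b) : c • a ≤ c • b := by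
  have := smul_nonneg'' hc (sub_nonneg.2 hab)
  rw [smul_sub] at this
  exact sub_nonneg.1 this

lemma abs_smul'' {c : ℝ} (hc : 0 < c) (w : E) : |c • w| = c • |w| := by
  have hle : ∀ (d : ℝ), 0 < d → ∀ u : E, |d • u| ≤ d • |u| := by
    intro d hd u
    rw [abs_le']
    constructor
    · exact smul_le_smul'' hd.le (le_abs_self u)
    · rw [← smul_neg]
      exact smul_le_smul'' hd.le (neg_le_abs u)
  refine le_antisymm (hle c hc w) ?_
  have h2 := hle c⁻¹ (by positivity) (c • w)
  rw [inv_smul_smul₀ hc.ne' w] at h2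
  have := smul_le_smul'' hc.le h2
  rwa [smul_inv_smul₀ hc.ne'] at this

end Aux2

section Aux3


lemma absVal_bddAbove (f : E →L[ℝ] ℝ) (u : E) :
    BddAbove ((fun y => f y) '' {y | |y| ≤ u}) := by
  refine ⟨‖f‖ * ‖u‖, ?_⟩
  rintro _ ⟨z, hz, rfl⟩
  have hu : 0 ≤ u := le_trans (abs_nonneg z) hz
  have hnz : ‖z‖ ≤ ‖u‖ := by
    refine HasSolidNorm.solid ?_
    rwa [abs_of_nonneg hu]
  calc f z ≤ ‖f z‖ := le_abs_self _
    _ ≤ ‖f‖ * ‖z‖ := f.le_opNorm z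
    _ ≤ ‖f‖ * ‖u‖ := by
        have := norm_nonneg f
        nlinarith

lemma le_absVal (f : E →L[ℝ] ℝ) {z u : E} (hz : |z| ≤ u) : f z ≤ absVal f u :=
  le_csSup (absVal_bddAbove f u) ⟨z, hz, rfl⟩

lemma absVal_nonneg (f : E →L[ℝ] ℝ) {u : E} (hu : 0 ≤ u) : 0 ≤ absVal f u := by
  have := le_absVal f (z := 0) (u := u) (by simpa using hu)
  simpa using this

lemma absVal_le_norm (f : E →L[ℝ] ℝ) {u : E} (hu : 0 ≤ u) : absVal f u ≤ ‖f‖ * ‖u‖ := by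
  refine csSup_le ⟨f 0, 0, by simpa using hu, rfl⟩ ?_
  rintro _ ⟨z, hz, rfl⟩
  have hnz : ‖z‖ ≤ ‖u‖ := HasSolidNorm.solid (by rwa [abs_of_nonneg hu])
  calc f z ≤ ‖f z‖ := le_abs_self _
    _ ≤ ‖f‖ * ‖z‖ := f.le_opNorm z
    _ ≤ ‖f‖ * ‖u‖ := by have := norm_nonneg f; nlinarith

lemma abs_apply_le_absVal (f : E →L[ℝ] ℝ) (z : E) : |f z| ≤ absVal f |z| := by
  rw [abs_le]
  constructor
  · rw [neg_le]
    have : f (-z) ≤ absVal f |z| := le_absVal f (by rw [abs_neg])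
    simpa using this
  · exact le_absVal f le_rfl

lemma absVal_mono (f : E →L[ℝ] ℝ) {u v : E} (hu : 0 ≤ u) (huv : u ≤ v) :
    absVal f u ≤ absVal f v := by
  refine csSup_le ⟨f 0, 0, by simpa using hu, rfl⟩ ?_
  rintro _ ⟨z, hz, rfl⟩
  exact le_absVal f (le_trans hz huv)

lemma absVal_add_le (f : E →L[ℝ] ℝ) {a b : E} (ha : 0 ≤ a) (hb : 0 ≤ b) :
    absVal f (a + b) ≤ absVal f a + absVal f b := by
  refine csSup_le ⟨f 0, 0, by simpa using add_nonneg ha hb, rfl⟩ ?_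
  rintro _ ⟨z, hz, rfl⟩
  obtain ⟨z₁, hz₁, hz₂⟩ := riesz_decomp ha hb hz
  calc f z = f z₁ + f (z - z₁) := by rw [← map_add]; congr 1; abel
    _ ≤ absVal f a + absVal f b := add_le_add (le_absVal f hz₁) (le_absVal f hz₂)

lemma absVal_zero (f : E →L[ℝ] ℝ) : absVal f 0 = 0 := by
  have h1 : 0 ≤ absVal f 0 := absVal_nonneg f le_rfl
  have h2 : absVal f 0 ≤ ‖f‖ * ‖(0 : E)‖ := absVal_le_norm f le_rfl
  rw [norm_zero, mul_zero] at h2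
  linarith

lemma absVal_lipschitz (f : E →L[ℝ] ℝ) {u v : E} (hu : 0 ≤ u) (hv : 0 ≤ v) :
    absVal f u ≤ absVal f v + ‖f‖ * ‖u - v‖ := by
  have h1 : u ≤ v + (u - v)⁺ := by
    have : u - v ≤ (u - v)⁺ := le_sup_left
    calc u = v + (u - v) := by abel
      _ ≤ v + (u - v)⁺ := add_le_add_right this v
  have h2 : absVal f u ≤ absVal f (v + (u - v)⁺) := absVal_mono f hu h1
  have h3 : absVal f (v + (u - v)⁺) ≤ absVal f v + absVal f ((u - v)⁺) :=
    absVal_add_le f hv (posPart_nonneg _)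
  have h4 : absVal f ((u - v)⁺) ≤ ‖f‖ * ‖(u - v)⁺‖ := absVal_le_norm f (posPart_nonneg _)
  have h5 : ‖(u - v)⁺‖ ≤ ‖u - v‖ := by
    refine HasSolidNorm.solid ?_
    rw [abs_of_nonneg (posPart_nonneg _)]
    calc (u - v)⁺ = |u - v| - (u - v)⁻ := by
          rw [← posPart_add_negPart (u - v)]; abel
      _ ≤ |u - v| := sub_le_self _ (negPart_nonneg _)
  have := norm_nonneg f
  nlinarith

lemma absVal_dominated {h f : E →L[ℝ] ℝ} (hdom : ∀ w, h w ≤ absVal f |w|) {u : E}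
    (hu : 0 ≤ u) : absVal h u ≤ absVal f u := by
  refine csSup_le ⟨h 0, 0, by simpa using hu, rfl⟩ ?_
  rintro _ ⟨z, hz, rfl⟩
  exact le_trans (hdom z) (absVal_mono f (abs_nonneg z) hz)

lemma absVal_smul_pos (f : E →L[ℝ] ℝ) {c : ℝ} (hc : 0 < c) {u : E} (hu : 0 ≤ u) :
    absVal f (c • u) = c * absVal f u := by
  have key : ∀ (d : ℝ), 0 < d → ∀ w : E, 0 ≤ w → absVal f (d • w) ≤ d * absVal f w := by
    intro d hd w hw
    have hdw : 0 ≤ d • w := smul_nonneg'' hd.le hw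
    refine csSup_le ⟨f 0, 0, by simpa using hdw, rfl⟩ ?_
    rintro _ ⟨z, hz, rfl⟩
    have hz' : |d⁻¹ • z| ≤ w := by
      rw [abs_smul'' (by positivity : (0:ℝ) < d⁻¹) z]
      have := smul_le_smul'' (by positivity : (0:ℝ) ≤ d⁻¹) hz
      rwa [inv_smul_smul₀ hd.ne' w] at this
    have h1 : f (d⁻¹ • z) ≤ absVal f w := le_absVal f hz'
    have h2 : f z = d * f (d⁻¹ • z) := by
      rw [map_smul, smul_eq_mul, ← mul_assoc, mul_inv_cancel₀ hd.ne', one_mul]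
    show f z ≤ d * absVal f w
    rw [h2]
    exact mul_le_mul_of_nonneg_left h1 hd.le
  refine le_antisymm (key c hc u hu) ?_
  have h2 := key c⁻¹ (by positivity) (c • u) (smul_nonneg'' hc.le hu)
  rw [inv_smul_smul₀ hc.ne' u] at h2
  have h3 := mul_le_mul_of_nonneg_left h2 hc.le
  rw [← mul_assoc, mul_inv_cancel₀ hc.ne', one_mul] at h3
  linarith

end Aux3

section Aux4


/-- Hahn–Banach: a functional dominated by `|f|` attaining `|f|(|x|)` at `x`. -/
lemma exists_dominated (f : E →L[ℝ] ℝ) (x : E) :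
    ∃ h : E →L[ℝ] ℝ, h x = absVal f |x| ∧ (∀ w, h w ≤ absVal f |w|) ∧ ‖h‖ ≤ ‖f‖ := by
  by_cases hx0 : x = 0
  · refine ⟨0, ?_, ?_, by simp⟩
    · simp [hx0, absVal_zero]
    · intro w
      simpa using absVal_nonneg f (abs_nonneg w)
  · set p : E → ℝ := fun w => absVal f |w| with hp
    have hp_nonneg : ∀ w, 0 ≤ p w := fun w => absVal_nonneg f (abs_nonneg w)
    have hp_hom : ∀ (c : ℝ), 0 < c → ∀ w, p (c • w) = c * p w := by
      intro c hc w
      show absVal f |c • w| = c * absVal f |w|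
      rw [abs_smul'' hc, absVal_smul_pos f hc (abs_nonneg w)]
    have hp_add : ∀ w₁ w₂, p (w₁ + w₂) ≤ p w₁ + p w₂ := by
      intro w₁ w₂
      show absVal f |w₁ + w₂| ≤ absVal f |w₁| + absVal f |w₂|
      exact le_trans (absVal_mono f (abs_nonneg _) (abs_add_le w₁ w₂))
        (absVal_add_le f (abs_nonneg _) (abs_nonneg _))
    set pm := LinearPMap.mkSpanSingleton (K := ℝ) (L := ℝ) (σ := RingHom.id ℝ) x (p x) hx0 with hpm
    have hf : ∀ w : pm.domain, pm w ≤ p ↑w := by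
      rintro ⟨w, hw⟩
      obtain ⟨c, rfl⟩ := Submodule.mem_span_singleton.1 hw
      have happ : pm ⟨c • x, hw⟩ = c * p x := by
        exact LinearPMap.mkSpanSingleton'_apply x (p x) _ c hw
      rw [happ]
      rcases lt_trichotomy c 0 with hc | hc | hc
      · have h1 : c * p x ≤ 0 := mul_nonpos_of_nonpos_of_nonneg hc.le (hp_nonneg x)
        exact h1.trans (hp_nonneg _)
      · simp [hc, hp_nonneg]
      · rw [← hp_hom c hc x]
    obtain ⟨g, hg1, hg2⟩ := exists_extension_of_le_sublinear pm p hp_hom hp_add hf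
    have hbound : ∀ w, ‖g w‖ ≤ ‖f‖ * ‖w‖ := by
      intro w
      rw [Real.norm_eq_abs, abs_le]
      constructor
      · rw [neg_le]
        have h1 : g (-w) ≤ p (-w) := hg2 (-w)
        have h2 : p (-w) ≤ ‖f‖ * ‖w‖ := by
          show absVal f |(-w)| ≤ _
          rw [abs_neg]
          calc absVal f |w| ≤ ‖f‖ * ‖|w|‖ := absVal_le_norm f (abs_nonneg w)
            _ = ‖f‖ * ‖w‖ := by rw [norm_abs_eq_norm]
        have : g (-w) = -g w := by rw [map_neg]
        rw [this] at h1
        linarith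
      · calc g w ≤ p w := hg2 w
          _ ≤ ‖f‖ * ‖w‖ := by
              show absVal f |w| ≤ _
              calc absVal f |w| ≤ ‖f‖ * ‖|w|‖ := absVal_le_norm f (abs_nonneg w)
                _ = ‖f‖ * ‖w‖ := by rw [norm_abs_eq_norm]
    refine ⟨g.mkContinuous ‖f‖ hbound, ?_, ?_, LinearMap.mkContinuous_norm_le g (norm_nonneg f) hbound⟩
    · show g x = absVal f |x|
      have hx_mem : x ∈ pm.domain := Submodule.mem_span_singleton_self x
      have := hg1 ⟨x, hx_mem⟩
      rw [this]
      exact LinearPMap.mkSpanSingleton_apply ℝ ℝ hx0 (p x)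
    · intro w
      exact hg2 w

end Aux4

end AuxLemmas

section Aux5

variable {E : Type*} [NormedAddCommGroup E] [Lattice E] [HasSolidNorm E] [IsOrderedAddMonoid E] [NormedSpace ℝ E]

lemma cauchySeq_of_monotone_le (hoc : OrderContinuousNorm E) {s : ℕ → E} {x : E}
    (hmono : Monotone s) (hbdd : ∀ N, s N ≤ x) : CauchySeq s := by
  set B : Set E := {y | ∀ N, s N ≤ y} with hB
  set C : Set E := {c | ∃ y ∈ B, ∃ N, c = y - s N} with hC
  have hxB : x ∈ B := hbdd
  have hCne : C.Nonempty := ⟨x - s 0, x, hxB, 0, rfl⟩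
  have hdir : DirectedOn (· ≥ ·) C := by
    rintro _ ⟨y₁, hy₁, N₁, rfl⟩ _ ⟨y₂, hy₂, N₂, rfl⟩
    refine ⟨(y₁ ⊓ y₂) - s (max N₁ N₂),
      ⟨y₁ ⊓ y₂, fun N => le_inf (hy₁ N) (hy₂ N), max N₁ N₂, rfl⟩, ?_, ?_⟩
    · exact sub_le_sub inf_le_left (hmono (le_max_left _ _))
    · exact sub_le_sub inf_le_right (hmono (le_max_right _ _))
  have hglb : IsGLB C 0 := by
    constructor
    · rintro _ ⟨y, hy, N, rfl⟩
      exact sub_nonneg.2 (hy N)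
    · intro b hb
      have key : ∀ k : ℕ, ∀ y ∈ B, y - k • b⁺ ∈ B := by
        intro k
        induction k with
        | zero => intro y hy; simpa using hy
        | succ k ih =>
          intro y hy
          have hy' : y - k • b⁺ ∈ B := ih y hy
          intro N
          have h1 : s N + b ≤ y - k • b⁺ := by
            have hbc : b ≤ (y - k • b⁺) - s N := hb ⟨y - k • b⁺, hy', N, rfl⟩
            have := add_le_add_right hbc (s N)
            calc s N + b ≤ s N + ((y - k • b⁺) - s N) := this
              _ = y - k • b⁺ := by abel
          have h2 : s N + b⁺ ≤ y - k • b⁺ := by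
            have : s N + b⁺ = (s N + b) ⊔ (s N + 0) := by
              rw [← add_sup]; rfl
            rw [this, add_zero]
            exact sup_le h1 (hy' N)
          calc s N = s N + b⁺ - b⁺ := by abel
            _ ≤ y - k • b⁺ - b⁺ := sub_le_sub_right h2 _
            _ = y - (k + 1) • b⁺ := by rw [succ_nsmul]; abel
      have hnorm : ∀ k : ℕ, (k : ℝ) * ‖b⁺‖ ≤ ‖x - s 0‖ := by
        intro k
        have h1 : s 0 ≤ x - k • b⁺ := key k x hxB 0
        have h2 : k • b⁺ ≤ x - s 0 := by
          have := add_le_add_left h1 (k • b⁺ - s 0)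
          calc k • b⁺ = s 0 + (k • b⁺ - s 0) := by abel
            _ ≤ x - k • b⁺ + (k • b⁺ - s 0) := this
            _ = x - s 0 := by abel
        have h3 : ‖k • b⁺‖ ≤ ‖x - s 0‖ := by
          refine HasSolidNorm.solid ?_
          have h4 : (0:E) ≤ k • b⁺ := nsmul_nonneg (posPart_nonneg b) k
          rw [abs_of_nonneg h4]
          exact h2.trans (le_abs_self _)
        calc (k : ℝ) * ‖b⁺‖ = ‖(k : ℝ) • b⁺‖ := by
              rw [norm_smul, Real.norm_natCast]
          _ = ‖k • b⁺‖ := by rw [Nat.cast_smul_eq_nsmul]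
          _ ≤ ‖x - s 0‖ := h3
      have hbp : b⁺ = 0 := by
        by_contra hne
        have hpos : 0 < ‖b⁺‖ := norm_pos_iff.2 hne
        obtain ⟨k, hk⟩ := exists_nat_gt (‖x - s 0‖ / ‖b⁺‖)
        have := hnorm k
        rw [div_lt_iff₀ hpos] at hk
        linarith
      have : b ≤ 0 := posPart_eq_zero.1 hbp
      exact this
  rw [Metric.cauchySeq_iff']
  intro ε hε
  obtain ⟨c, ⟨y, hy, N, rfl⟩, hc⟩ := hoc C hCne hdir hglb ε hε
  refine ⟨N, fun n hn => ?_⟩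
  have h1 : |s n - s N| ≤ |y - s N| := by
    rw [abs_of_nonneg (sub_nonneg.2 (hmono hn)), abs_of_nonneg (sub_nonneg.2 (hy N))]
    exact sub_le_sub (hy n) le_rfl
  have h2 : ‖s n - s N‖ ≤ ‖y - s N‖ := HasSolidNorm.solid h1
  rw [dist_eq_norm]
  exact lt_of_le_of_lt h2 hc

end Aux5

section Aux6

variable {E : Type*} [NormedAddCommGroup E] [Lattice E] [HasSolidNorm E] [IsOrderedAddMonoid E] [NormedSpace ℝ E]

/-- Running infimum of a sequence. -/
noncomputable def infSeq (u : ℕ → E) : ℕ → E := fun j =>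
  Nat.rec (u 0) (fun j acc => acc ⊓ u (j + 1)) j

/-- Running supremum of a sequence. -/
noncomputable def supSeq (u : ℕ → E) : ℕ → E := fun j =>
  Nat.rec (u 0) (fun j acc => acc ⊔ u (j + 1)) j

lemma infSeq_succ (u : ℕ → E) (j : ℕ) : infSeq u (j + 1) = infSeq u j ⊓ u (j + 1) := rfl

lemma supSeq_succ (u : ℕ → E) (j : ℕ) : supSeq u (j + 1) = supSeq u j ⊔ u (j + 1) := rfl

lemma infSeq_le (u : ℕ → E) : ∀ {i j : ℕ}, i ≤ j → infSeq u j ≤ u i := by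
  intro i j
  induction j with
  | zero => intro hij; rw [Nat.le_zero.1 hij]; exact le_rfl
  | succ j ih =>
    intro hij
    rcases Nat.lt_succ_iff_lt_or_eq.1 (Nat.lt_succ_of_le hij) with h | h
    · exact le_trans inf_le_left (ih (Nat.lt_succ_iff.1 h))
    · rw [h]; exact inf_le_right

lemma le_infSeq (u : ℕ → E) {c : E} (hc : ∀ i, c ≤ u i) (j : ℕ) : c ≤ infSeq u j := by
  induction j with
  | zero => exact hc 0
  | succ j ih => exact le_inf ih (hc _)

lemma infSeq_antitone (u : ℕ → E) : Antitone (infSeq u) :=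
  antitone_nat_of_succ_le fun n => inf_le_left

lemma supSeq_monotone (u : ℕ → E) : Monotone (supSeq u) :=
  monotone_nat_of_le_succ fun n => le_sup_left

lemma supSeq_le (u : ℕ → E) {c : E} (hc : ∀ i, u i ≤ c) (j : ℕ) : supSeq u j ≤ c := by
  induction j with
  | zero => exact hc 0
  | succ j ih => exact sup_le ih (hc _)

lemma le_supSeq (u : ℕ → E) {i j : ℕ} (hij : i ≤ j) : u i ≤ supSeq u j := by
  induction j with
  | zero => rw [Nat.le_zero.1 hij]; exact le_rfl
  | succ j ih =>
    rcases Nat.lt_succ_iff_lt_or_eq.1 (Nat.lt_succ_of_le hij) with h | h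
    · exact le_trans (ih (Nat.lt_succ_iff.1 h)) le_sup_left
    · rw [h]; exact le_sup_right

lemma sub_inf_le_add {a b x : E} (ha : a ≤ x) (hb : b ≤ x) :
    x - a ⊓ b ≤ (x - a) + (x - b) := by
  have h := inf_add_sup a b
  have h2 : a ⊔ b ≤ x := sup_le ha hb
  calc x - a ⊓ b = x - (a ⊓ b + a ⊔ b) + (a ⊔ b) := by abel
    _ = x - (a + b) + (a ⊔ b) := by rw [h]
    _ ≤ x - (a + b) + x := add_le_add_right h2 _
    _ = (x - a) + (x - b) := by abel

lemma absVal_finsum_le (f : E →L[ℝ] ℝ) (v : ℕ → E) (hv : ∀ i, 0 ≤ v i) (n : ℕ) :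
    absVal f (∑ i ∈ Finset.range n, v i) ≤ ∑ i ∈ Finset.range n, absVal f (v i) := by
  induction n with
  | zero => simp [absVal_zero]
  | succ n ih =>
    rw [Finset.sum_range_succ, Finset.sum_range_succ]
    calc absVal f (∑ i ∈ Finset.range n, v i + v n)
        ≤ absVal f (∑ i ∈ Finset.range n, v i) + absVal f (v n) :=
          absVal_add_le f (Finset.sum_nonneg fun i _ => hv i) (hv n)
      _ ≤ _ := add_le_add_left ih _

/-- limit of the running infimum exists. -/
lemma exists_inf_limit (hoc : OrderContinuousNorm E) [CompleteSpace E] (u : ℕ → E) (x : E)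
    (h0 : ∀ i, 0 ≤ u i) (hx : ∀ i, u i ≤ x) :
    ∃ Z, Filter.Tendsto (infSeq u) Filter.atTop (nhds Z) ∧ 0 ≤ Z ∧ ∀ i, Z ≤ u i := by
  have hmono : Monotone fun j => x - infSeq u j := fun i j hij =>
    sub_le_sub_left (infSeq_antitone u hij) x
  have hbdd : ∀ j, x - infSeq u j ≤ x := fun j => by
    have : 0 ≤ infSeq u j := le_infSeq u h0 j
    calc x - infSeq u j ≤ x - 0 := sub_le_sub_left this x
      _ = x := sub_zero x
  have hcs : CauchySeq fun j => x - infSeq u j := cauchySeq_of_monotone_le hoc hmono hbdd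
  have hcz : CauchySeq (infSeq u) := by
    rw [Metric.cauchySeq_iff] at hcs ⊢
    intro ε' hε'
    obtain ⟨N, hN⟩ := hcs ε' hε'
    refine ⟨N, fun m hm n hn => ?_⟩
    have := hN m hm n hn
    rwa [dist_sub_left] at this
  obtain ⟨Z, hZ⟩ := cauchySeq_tendsto_of_complete hcz
  refine ⟨Z, hZ, ?_, ?_⟩
  · exact ge_of_tendsto hZ (Filter.Eventually.of_forall fun j => le_infSeq u h0 j)
  · intro i
    exact le_of_tendsto hZ (Filter.eventually_atTop.2 ⟨i, fun j hj => infSeq_le u hj⟩)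

end Aux6

section Aux7

variable {E : Type*} [NormedAddCommGroup E] [Lattice E] [HasSolidNorm E] [IsOrderedAddMonoid E] [NormedSpace ℝ E]

set_option maxHeartbeats 1600000 in
/-- Key lemma: if `E` has order continuous norm, then for every norm bounded pairwise
disjoint sequence of functionals, `|g n|(x) → 0` for each `x ≥ 0`. -/
lemma absVal_eventually_small [CompleteSpace E] (hoc : OrderContinuousNorm E)
    (g : ℕ → E →L[ℝ] ℝ) (K : ℝ) (hK : ∀ n, ‖g n‖ ≤ K)
    (hd : Pairwise fun m n => FunDisjoint (g m) (g n))
    {x : E} (hx : 0 ≤ x) {ε : ℝ} (hε : 0 < ε) :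
    ∀ᶠ n in Filter.atTop, absVal (g n) x < ε := by
  by_contra hcon
  rw [Filter.not_eventually] at hcon
  have hfreq : ∃ᶠ n in Filter.atTop, ε ≤ absVal (g n) x :=
    hcon.mono fun n hn => not_lt.1 hn
  obtain ⟨φ, hφ, hφval⟩ := Filter.extraction_of_frequently_atTop hfreq
  set G : ℕ → E →L[ℝ] ℝ := fun k => g (φ k) with hGdef
  have hGd : ∀ {k l : ℕ}, k ≠ l → FunDisjoint (G k) (G l) := fun {k l} hkl =>
    hd (hφ.injective.ne hkl)
  have hGK : ∀ k, ‖G k‖ ≤ K := fun k => hK _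
  have hK0 : 0 ≤ K := le_trans (norm_nonneg _) (hK 0)
  set δ : ℕ → ℝ := fun l => ε / 16 * (1 / 2) ^ l with hδdef
  have hδpos : ∀ l, 0 < δ l := fun l => by
    rw [hδdef]; positivity
  have hpair : ∀ k l, ∃ y, (0 ≤ y ∧ y ≤ x) ∧
      (k < l → absVal (G l) y < δ l ∧ absVal (G k) (x - y) < δ l) := by
    intro k l
    by_cases hkl : k < l
    · have hfd : FunDisjoint (G l) (G k) := hGd (Nat.ne_of_gt hkl)
      have h0 := hfd x hx
      have hne : ((fun y => absVal (G l) y + absVal (G k) (x - y)) ''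
          {y | 0 ≤ y ∧ y ≤ x}).Nonempty := ⟨_, ⟨0, ⟨le_rfl, hx⟩, rfl⟩⟩
      obtain ⟨a, ⟨y, hy, rfl⟩, ha⟩ := Real.lt_sInf_add_pos hne (hδpos l)
      rw [h0, zero_add] at ha
      have ha' : absVal (G l) y + absVal (G k) (x - y) < δ l := ha
      have hn1 : 0 ≤ absVal (G l) y := absVal_nonneg _ hy.1
      have hn2 : 0 ≤ absVal (G k) (x - y) := absVal_nonneg _ (sub_nonneg.2 hy.2)
      exact ⟨y, hy, fun _ => ⟨by linarith, by linarith⟩⟩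
    · exact ⟨x, ⟨hx, le_rfl⟩, fun h => absurd h hkl⟩
  choose Y hY hYval using hpair
  have hsumgeo : ∀ k n : ℕ, (∑ i ∈ Finset.range n, δ (k + 1 + i)) ≤ ε / 16 * (1 / 2) ^ k := by
    intro k n
    have h1 : ∀ i : ℕ, δ (k + 1 + i) = (ε / 16 * (1 / 2) ^ (k + 1)) * (1 / 2 : ℝ) ^ i := by
      intro i
      rw [hδdef]
      show ε / 16 * (1 / 2) ^ (k + 1 + i) = _
      rw [pow_add]
      ring
    have hgeo := sum_geometric_two_le n
    have hc : (0:ℝ) ≤ ε / 16 * (1 / 2) ^ (k + 1) := by positivity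
    calc (∑ i ∈ Finset.range n, δ (k + 1 + i))
        = (ε / 16 * (1 / 2) ^ (k + 1)) * ∑ i ∈ Finset.range n, (1 / 2 : ℝ) ^ i := by
          rw [Finset.mul_sum]
          exact Finset.sum_congr rfl fun i _ => h1 i
      _ ≤ (ε / 16 * (1 / 2) ^ (k + 1)) * 2 := by nlinarith
      _ = ε / 16 * (1 / 2) ^ k := by rw [pow_succ]; ring
  -- build the limit elements
  have hzex : ∀ k, ∃ Z, (0 ≤ Z ∧ Z ≤ x) ∧ (∀ l, k < l → Z ≤ Y k l) ∧
      absVal (G k) (x - Z) ≤ ε / 16 * (1 / 2) ^ k := by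
    intro k
    set u : ℕ → E := fun i => Y k (k + 1 + i) with hu
    have hu0 : ∀ i, 0 ≤ u i := fun i => (hY k (k + 1 + i)).1
    have hux : ∀ i, u i ≤ x := fun i => (hY k (k + 1 + i)).2
    obtain ⟨Z, hZt, hZ0, hZle⟩ := exists_inf_limit hoc u x hu0 hux
    have hZx : Z ≤ x := (hZle 0).trans (hux 0)
    have hix : ∀ j, infSeq u j ≤ x := fun j => (infSeq_le u (Nat.zero_le j)).trans (hux 0)
    have hi0 : ∀ j, (0:E) ≤ infSeq u j := fun j => le_infSeq u hu0 j
    have hbound : ∀ j, absVal (G k) (x - infSeq u j) ≤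
        ∑ i ∈ Finset.range (j + 1), δ (k + 1 + i) := by
      intro j
      induction j with
      | zero =>
        rw [Finset.sum_range_one]
        have h2 := (hYval k (k + 1) (Nat.lt_succ_self k)).2
        have : infSeq u 0 = Y k (k + 1) := by
          show u 0 = _
          rw [hu]
        rw [this]
        have h3 : k + 1 + 0 = k + 1 := by omega
        rw [h3]
        exact h2.le
      | succ j ih =>
        have hsub : x - infSeq u (j + 1) ≤ (x - infSeq u j) + (x - u (j + 1)) := by
          rw [infSeq_succ]
          exact sub_inf_le_add (hix j) (hux (j + 1))
        have hYl := (hYval k (k + 1 + (j + 1)) (by omega)).2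
        calc absVal (G k) (x - infSeq u (j + 1))
            ≤ absVal (G k) ((x - infSeq u j) + (x - u (j + 1))) :=
              absVal_mono _ (sub_nonneg.2 (hix (j + 1))) hsub
          _ ≤ absVal (G k) (x - infSeq u j) + absVal (G k) (x - u (j + 1)) :=
              absVal_add_le _ (sub_nonneg.2 (hix j)) (sub_nonneg.2 (hux (j + 1)))
          _ ≤ (∑ i ∈ Finset.range (j + 1), δ (k + 1 + i)) + δ (k + 1 + (j + 1)) :=
              add_le_add ih hYl.le
          _ = ∑ i ∈ Finset.range (j + 2), δ (k + 1 + i) := (Finset.sum_range_succ _ _).symm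
    have hlim : absVal (G k) (x - Z) ≤ ε / 16 * (1 / 2) ^ k := by
      refine le_of_forall_pos_le_add ?_
      intro η hη
      have hnt : Filter.Tendsto (fun j => ‖infSeq u j - Z‖) Filter.atTop (nhds 0) := by
        have h1 := hZt.sub_const Z
        rw [sub_self] at h1
        have h2 := h1.norm
        rwa [norm_zero] at h2
      have hev : ∀ᶠ j in Filter.atTop, ‖infSeq u j - Z‖ < η / (K + 1) := by
        have hpos : (0:ℝ) < η / (K + 1) := by positivity
        exact hnt.eventually_lt_const hpos
      obtain ⟨j, hj⟩ := hev.exists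
      have h1 : absVal (G k) (x - Z) ≤ absVal (G k) (x - infSeq u j) +
          ‖G k‖ * ‖(x - Z) - (x - infSeq u j)‖ :=
        absVal_lipschitz _ (sub_nonneg.2 hZx) (sub_nonneg.2 (hix j))
      have h2 : (x - Z) - (x - infSeq u j) = infSeq u j - Z := by abel
      rw [h2] at h1
      have h3 : ‖G k‖ * ‖infSeq u j - Z‖ ≤ K * (η / (K + 1)) := by
        have := hGK k
        have hn0 := norm_nonneg (infSeq u j - Z)
        nlinarith
      have h4 : K * (η / (K + 1)) ≤ η := by
        rw [mul_comm, div_mul_eq_mul_div, div_le_iff₀ (by positivity : (0:ℝ) < K + 1)]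
        nlinarith
      have h5 := (hbound j).trans (hsumgeo k (j + 1))
      linarith
    refine ⟨Z, ⟨hZ0, hZx⟩, ?_, hlim⟩
    intro l hkl
    obtain ⟨i, rfl⟩ : ∃ i, l = k + 1 + i := ⟨l - (k + 1), by omega⟩
    exact hZle i
  choose W hW1 hW2 hW3 using hzex
  -- the running supremum of the W's
  set t : ℕ → E := supSeq W with htdef
  have ht0 : ∀ j, (0:E) ≤ t j := fun j => le_trans (hW1 0).1 (le_supSeq W (Nat.zero_le j))
  have htx : ∀ j, t j ≤ x := fun j => supSeq_le W (fun i => (hW1 i).2) j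
  have hct : CauchySeq t := cauchySeq_of_monotone_le hoc (supSeq_monotone W) htx
  set η := ε / (2 * (K + 1)) with hηdef
  have hηpos : 0 < η := by rw [hηdef]; positivity
  rw [Metric.cauchySeq_iff'] at hct
  obtain ⟨N, hN⟩ := hct η hηpos
  have hwd := hN (N + 1) (Nat.le_succ N)
  rw [dist_eq_norm] at hwd
  set w := t (N + 1) - t N with hwdef
  have hw0 : (0:E) ≤ w := sub_nonneg.2 (supSeq_monotone W (Nat.le_succ N))
  have hdecomp : W (N + 1) = w + W (N + 1) ⊓ t N := by
    have h := inf_add_sup (W (N + 1)) (t N)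
    have hsc : W (N + 1) ⊔ t N = t N ⊔ W (N + 1) := sup_comm _ _
    have ht1 : t (N + 1) = t N ⊔ W (N + 1) := supSeq_succ W N
    calc W (N + 1) = W (N + 1) ⊓ t N + (W (N + 1) ⊔ t N) - t N := by
          rw [h]; abel
      _ = (t N ⊔ W (N + 1)) - t N + W (N + 1) ⊓ t N := by rw [hsc]; abel
      _ = w + W (N + 1) ⊓ t N := by rw [hwdef, ht1]
  have hWtN0 : (0:E) ≤ W (N + 1) ⊓ t N := le_inf (hW1 _).1 (ht0 N)
  have hsplit : absVal (G (N + 1)) (W (N + 1)) ≤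
      absVal (G (N + 1)) w + absVal (G (N + 1)) (W (N + 1) ⊓ t N) := by
    calc absVal (G (N + 1)) (W (N + 1))
        = absVal (G (N + 1)) (w + W (N + 1) ⊓ t N) := by rw [← hdecomp]
      _ ≤ _ := absVal_add_le _ hw0 hWtN0
  -- bound on the overlap
  have hinfle : ∀ M, W (N + 1) ⊓ t M ≤ ∑ m ∈ Finset.range (M + 1), (W (N + 1) ⊓ W m) := by
    intro M
    induction M with
    | zero =>
      rw [Finset.sum_range_one]
      exact le_rfl
    | succ M ih =>
      have ht1 : t (M + 1) = t M ⊔ W (M + 1) := supSeq_succ W M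
      have hsum : t M ⊔ W (M + 1) ≤ t M + W (M + 1) :=
        sup_le (le_add_of_nonneg_right (hW1 _).1) (le_add_of_nonneg_left (ht0 M))
      calc W (N + 1) ⊓ t (M + 1) ≤ W (N + 1) ⊓ (t M + W (M + 1)) := by
            rw [ht1]; exact inf_le_inf_left _ hsum
        _ ≤ W (N + 1) ⊓ t M + W (N + 1) ⊓ W (M + 1) :=
            inf_add_le_inf_add_inf (hW1 _).1 (ht0 M) (hW1 _).1
        _ ≤ (∑ m ∈ Finset.range (M + 1), (W (N + 1) ⊓ W m)) + W (N + 1) ⊓ W (M + 1) :=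
            add_le_add_left ih _
        _ = ∑ m ∈ Finset.range (M + 2), (W (N + 1) ⊓ W m) := (Finset.sum_range_succ _ _).symm
  have hoverlap : absVal (G (N + 1)) (W (N + 1) ⊓ t N) ≤ ε / 16 := by
    have h1 : absVal (G (N + 1)) (W (N + 1) ⊓ t N) ≤
        absVal (G (N + 1)) (∑ m ∈ Finset.range (N + 1), (W (N + 1) ⊓ W m)) :=
      absVal_mono _ hWtN0 (hinfle N)
    have h2 : absVal (G (N + 1)) (∑ m ∈ Finset.range (N + 1), (W (N + 1) ⊓ W m)) ≤
        ∑ m ∈ Finset.range (N + 1), absVal (G (N + 1)) (W (N + 1) ⊓ W m) :=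
      absVal_finsum_le _ _ (fun m => le_inf (hW1 _).1 (hW1 _).1) _
    have h3 : ∀ m ∈ Finset.range (N + 1), absVal (G (N + 1)) (W (N + 1) ⊓ W m) ≤ δ (N + 1) := by
      intro m hm
      rw [Finset.mem_range] at hm
      have hWm : W m ≤ Y m (N + 1) := hW2 m (N + 1) hm
      have hle1 : absVal (G (N + 1)) (W (N + 1) ⊓ W m) ≤ absVal (G (N + 1)) (W m) :=
        absVal_mono _ (le_inf (hW1 _).1 (hW1 _).1) inf_le_right
      have hle2 : absVal (G (N + 1)) (W m) ≤ absVal (G (N + 1)) (Y m (N + 1)) :=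
        absVal_mono _ (hW1 m).1 hWm
      exact hle1.trans (hle2.trans (hYval m (N + 1) hm).1.le)
    have h4 : (∑ m ∈ Finset.range (N + 1), absVal (G (N + 1)) (W (N + 1) ⊓ W m)) ≤
        (N + 1 : ℝ) * δ (N + 1) := by
      calc (∑ m ∈ Finset.range (N + 1), absVal (G (N + 1)) (W (N + 1) ⊓ W m))
          ≤ ∑ _m ∈ Finset.range (N + 1), δ (N + 1) := Finset.sum_le_sum h3
        _ = (N + 1 : ℝ) * δ (N + 1) := by
            rw [Finset.sum_const, Finset.card_range, nsmul_eq_mul]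
            norm_num
    have h5 : (N + 1 : ℝ) * δ (N + 1) ≤ ε / 16 := by
      rw [hδdef]
      show (N + 1 : ℝ) * (ε / 16 * (1 / 2) ^ (N + 1)) ≤ ε / 16
      have hc1 : ((N + 1 : ℕ) : ℝ) ≤ (2:ℝ) ^ (N + 1) := by
        exact_mod_cast (Nat.lt_two_pow_self (n := N + 1)).le
      have hc2 : (2:ℝ) ^ (N + 1) * (1 / 2 : ℝ) ^ (N + 1) = 1 := by
        rw [← mul_pow]; norm_num
      have hc3 : (0:ℝ) < (1 / 2 : ℝ) ^ (N + 1) := by positivity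
      have hc4 : ((N + 1 : ℕ) : ℝ) = (N + 1 : ℝ) := by push_cast; ring
      have hc5 : (N + 1 : ℝ) * (1 / 2 : ℝ) ^ (N + 1) ≤ 1 := by
        rw [← hc4]
        nlinarith [mul_le_mul_of_nonneg_right hc1 hc3.le]
      nlinarith [hε.le, hc5]
    linarith
  -- lower bound on the mass of `W (N+1)`
  have hself : ε - ε / 16 ≤ absVal (G (N + 1)) (W (N + 1)) := by
    have hεx : ε ≤ absVal (G (N + 1)) x := hφval (N + 1)
    have hxeq : x = W (N + 1) + (x - W (N + 1)) := by abel
    have hsp : absVal (G (N + 1)) x ≤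
        absVal (G (N + 1)) (W (N + 1)) + absVal (G (N + 1)) (x - W (N + 1)) := by
      calc absVal (G (N + 1)) x = absVal (G (N + 1)) (W (N + 1) + (x - W (N + 1))) := by
            rw [← hxeq]
        _ ≤ _ := absVal_add_le _ (hW1 _).1 (sub_nonneg.2 (hW1 _).2)
    have h6 : absVal (G (N + 1)) (x - W (N + 1)) ≤ ε / 16 := by
      refine (hW3 (N + 1)).trans ?_
      have h7 : (1 / 2 : ℝ) ^ (N + 1) ≤ 1 := by
        apply pow_le_one₀ <;> norm_num
      nlinarith [hε.le, h7]
    linarith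
  -- final contradiction
  have hwabs : absVal (G (N + 1)) w ≤ K * η := by
    have h1 : absVal (G (N + 1)) w ≤ ‖G (N + 1)‖ * ‖w‖ := absVal_le_norm _ hw0
    have h2 : ‖G (N + 1)‖ * ‖w‖ ≤ K * ‖w‖ :=
      mul_le_mul_of_nonneg_right (hGK _) (norm_nonneg w)
    have h3 : K * ‖w‖ ≤ K * η := mul_le_mul_of_nonneg_left hwd.le hK0
    linarith
  have hKη : K * η ≤ ε / 2 := by
    rw [hηdef, mul_comm, div_mul_eq_mul_div,
      div_le_div_iff₀ (by positivity : (0:ℝ) < 2 * (K + 1)) (by norm_num : (0:ℝ) < 2)]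
    nlinarith [hε.le, hK0]
  linarith

end Aux7

section Aux8

variable {E : Type*} [NormedAddCommGroup E] [Lattice E] [HasSolidNorm E] [IsOrderedAddMonoid E] [NormedSpace ℝ E]

/-- Disjointness transfers to dominated functionals. -/
lemma fundisjoint_transfer {h F h' F' : E →L[ℝ] ℝ}
    (hdom : ∀ w, h w ≤ absVal F |w|) (hdom' : ∀ w, h' w ≤ absVal F' |w|)
    (hFD : FunDisjoint F F') : FunDisjoint h h' := by
  intro x hx
  have hmem0 : (0:E) ∈ {y : E | 0 ≤ y ∧ y ≤ x} := ⟨le_rfl, hx⟩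
  have hbdd : BddBelow ((fun y => absVal h y + absVal h' (x - y)) '' {y | 0 ≤ y ∧ y ≤ x}) := by
    refine ⟨0, ?_⟩
    rintro _ ⟨y, hy, rfl⟩
    exact add_nonneg (absVal_nonneg _ hy.1) (absVal_nonneg _ (sub_nonneg.2 hy.2))
  have hne : ((fun y => absVal h y + absVal h' (x - y)) '' {y | 0 ≤ y ∧ y ≤ x}).Nonempty :=
    ⟨_, 0, hmem0, rfl⟩
  refine le_antisymm ?_ ?_
  · refine le_of_forall_pos_le_add ?_
    intro δ hδ
    have h0 := hFD x hx
    have hneF : ((fun y => absVal F y + absVal F' (x - y)) '' {y | 0 ≤ y ∧ y ≤ x}).Nonempty :=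
      ⟨_, 0, hmem0, rfl⟩
    obtain ⟨a, ⟨y, hy, rfl⟩, ha⟩ := Real.lt_sInf_add_pos hneF hδ
    rw [h0, zero_add] at ha
    have ha' : absVal F y + absVal F' (x - y) < δ := ha
    have hle1 : absVal h y ≤ absVal F y := absVal_dominated hdom hy.1
    have hle2 : absVal h' (x - y) ≤ absVal F' (x - y) :=
      absVal_dominated hdom' (sub_nonneg.2 hy.2)
    have hmem : absVal h y + absVal h' (x - y) ∈
        (fun y => absVal h y + absVal h' (x - y)) '' {y | 0 ≤ y ∧ y ≤ x} := ⟨y, hy, rfl⟩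
    have := csInf_le hbdd hmem
    linarith
  · refine le_csInf hne ?_
    rintro _ ⟨y, hy, rfl⟩
    exact add_nonneg (absVal_nonneg _ hy.1) (absVal_nonneg _ (sub_nonneg.2 hy.2))

end Aux8

set_option maxHeartbeats 800000 in
/-- If a Banach lattice has order continuous norm, then the solid hull of every
almost limited set is almost limited. -/
theorem stmt19 {E : Type*} [NormedAddCommGroup E] [Lattice E] [HasSolidNorm E] [IsOrderedAddMonoid E] [NormedSpace ℝ E] [CompleteSpace E]
    (h : OrderContinuousNorm E) (A : Set E) (hA : AlmostLimited A) :
    AlmostLimited (SolidHull A) := by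
  obtain ⟨hAb, hAlim⟩ := hA
  constructor
  · rw [isBounded_iff_forall_norm_le] at hAb ⊢
    obtain ⟨C, hC⟩ := hAb
    refine ⟨C, ?_⟩
    rintro y ⟨x, hxA, hxy⟩
    exact le_trans (HasSolidNorm.solid hxy) (hC x hxA)
  · intro f hdisj hwstar ε hε
    by_contra hcon
    rw [Filter.not_eventually] at hcon
    have hfreq : ∃ᶠ n in Filter.atTop, ∃ y ∈ SolidHull A, ε ≤ |f n y| := by
      refine hcon.mono fun n hn => ?_
      push_neg at hn
      exact hn
    obtain ⟨φ, hφ, hφval⟩ := Filter.extraction_of_frequently_atTop hfreq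
    -- uniform bound on the f's
    obtain ⟨K, hKb⟩ := banach_steinhaus (g := f) (by
      intro v
      obtain ⟨C, hC⟩ := ((hwstar v).abs).bddAbove_range
      refine ⟨C, fun i => ?_⟩
      exact hC (Set.mem_range_self i))
    -- points of A carrying mass
    have hxk : ∀ k, ∃ xx ∈ A, ε ≤ absVal (f (φ k)) |xx| := by
      intro k
      obtain ⟨y, ⟨xx, hxA, hxy⟩, hy2⟩ := hφval k
      refine ⟨xx, hxA, ?_⟩
      calc ε ≤ |f (φ k) y| := hy2
        _ ≤ absVal (f (φ k)) |y| := abs_apply_le_absVal _ y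
        _ ≤ absVal (f (φ k)) |xx| := absVal_mono _ (abs_nonneg y) hxy
    choose xk hxkA hxkval using hxk
    -- Hahn–Banach functionals
    choose hfun hh1 hh2 hh3 using fun k => exists_dominated (f (φ k)) (xk k)
    have hKh : ∀ k, ‖hfun k‖ ≤ K := fun k => (hh3 k).trans (hKb (φ k))
    have hhd : Pairwise fun k l => FunDisjoint (hfun k) (hfun l) := fun k l hkl =>
      fundisjoint_transfer (hh2 k) (hh2 l) (hdisj (hφ.injective.ne hkl))
    -- weak* null
    have hwn : WeakStarNull hfun := by
      intro wv
      rw [NormedAddCommGroup.tendsto_nhds_zero]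
      intro ε' hε'
      have hp1 := absVal_eventually_small h hfun K hKh hhd (posPart_nonneg wv)
        (half_pos hε')
      have hp2 := absVal_eventually_small h hfun K hKh hhd (negPart_nonneg wv)
        (half_pos hε')
      filter_upwards [hp1, hp2] with k h1 h2
      have e1 : hfun k wv = hfun k (wv⁺) - hfun k (wv⁻) := by
        rw [← map_sub, posPart_sub_negPart]
      have e2 : |hfun k (wv⁺)| ≤ absVal (hfun k) (wv⁺) := by
        have := abs_apply_le_absVal (hfun k) (wv⁺)
        rwa [abs_of_nonneg (posPart_nonneg wv)] at this
      have e3 : |hfun k (wv⁻)| ≤ absVal (hfun k) (wv⁻) := by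
        have := abs_apply_le_absVal (hfun k) (wv⁻)
        rwa [abs_of_nonneg (negPart_nonneg wv)] at this
      rw [Real.norm_eq_abs, e1]
      calc |hfun k (wv⁺) - hfun k (wv⁻)| ≤ |hfun k (wv⁺)| + |hfun k (wv⁻)| := abs_sub _ _
        _ < ε' / 2 + ε' / 2 := by
            have := e2.trans_lt h1
            have := e3.trans_lt h2
            linarith
        _ = ε' := by ring
    -- contradiction
    have hev := hAlim hfun hhd hwn ε hε
    obtain ⟨n, hn⟩ := hev.exists
    have h1 : ε ≤ hfun n (xk n) := by
      rw [hh1 n]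
      exact hxkval n
    have h2 : |hfun n (xk n)| < ε := hn (xk n) (hxkA n)
    have h3 : hfun n (xk n) ≤ |hfun n (xk n)| := le_abs_self _
    linarith
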